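/- For a uniformly random permutation ψ of a finite universe V and nonempty subsets A, B ⊆ V, the probability that the minimum of ψ applied to A equals the minimum of ψ applied to B is |A ∩ B| / |A ∪ B| (the Jaccard similarity of A and B). -/
import Mathlib


/-- Min-hash collision probability: for a uniformly random permutation ψ of `Fin n`
and nonempty subsets A, B, the probability that `min ψ(A) = min ψ(B)` equals the
Jaccard similarity `|A ∩ B| / |A ∪ B|`. -/
theorem minhash_collision_prob (n : ℕ) (A B : Finset (Fin n))
    (hA : A.Nonempty) (hB : B.Nonempty) :
    ((Finset.univ.filter (fun ψ : Equiv.Perm (Fin n) =>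
        (A.image ψ).min' (hA.image ψ) = (B.image ψ).min' (hB.image ψ))).card : ℝ) /
      (Fintype.card (Equiv.Perm (Fin n)) : ℝ)
    = ((A ∩ B).card : ℝ) / ((A ∪ B).card : ℝ) := by
  classical
  set U : Finset (Fin n) := A ∪ B with hUdef
  have hU : U.Nonempty := hA.mono Finset.subset_union_left
  -- the "argmin" of ψ on U
  set F : Equiv.Perm (Fin n) → Fin n :=
    fun ψ => ψ.symm ((U.image ψ).min' (hU.image ψ)) with hFdef
  have hmemF : ∀ ψ : Equiv.Perm (Fin n), F ψ ∈ U := by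
    intro ψ
    have h := Finset.min'_mem (U.image ψ) (hU.image ψ)
    obtain ⟨x, hx, hxe⟩ := Finset.mem_image.mp h
    simpa [hFdef, ← hxe] using hx
  -- key equivalence
  have key : ∀ ψ : Equiv.Perm (Fin n),
      ((A.image ψ).min' (hA.image ψ) = (B.image ψ).min' (hB.image ψ)) ↔ F ψ ∈ A ∩ B := by
    intro ψ
    have hUimg : U.image ψ = A.image ψ ∪ B.image ψ := by
      rw [hUdef]; exact Finset.image_union _ _
    set m := (U.image ψ).min' (hU.image ψ) with hm
    have hsubA : A.image ψ ⊆ U.image ψ := Finset.image_subset_image Finset.subset_union_left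
    have hsubB : B.image ψ ⊆ U.image ψ := Finset.image_subset_image Finset.subset_union_right
    constructor
    · intro h
      -- m = min of union = common value
      have hAle : m ≤ (A.image ψ).min' (hA.image ψ) :=
        Finset.min'_le _ _ (hsubA (Finset.min'_mem _ _))
      have hmm : m ∈ U.image ψ := Finset.min'_mem _ _
      have hmem' : m ∈ A.image ψ ∪ B.image ψ := hUimg ▸ hmm
      have hmv : m = (A.image ψ).min' (hA.image ψ) := by
        rcases Finset.mem_union.mp hmem' with hma | hmb
        · exact le_antisymm hAle (Finset.min'_le _ _ hma)
        · refine le_antisymm hAle ?_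
          rw [h]; exact Finset.min'_le _ _ hmb
      have hmA : m ∈ A.image ψ := hmv ▸ Finset.min'_mem _ _
      have hmB : m ∈ B.image ψ := by rw [hmv, h]; exact Finset.min'_mem _ _
      obtain ⟨a, ha, hae⟩ := Finset.mem_image.mp hmA
      obtain ⟨b, hb, hbe⟩ := Finset.mem_image.mp hmB
      have haF : F ψ = a := by simp [hFdef, ← hm, ← hae]
      have hbF : F ψ = b := by simp [hFdef, ← hm, ← hbe]
      exact Finset.mem_inter.mpr ⟨haF ▸ ha, hbF ▸ hb⟩
    · intro h
      obtain ⟨hFA, hFB⟩ := Finset.mem_inter.mp h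
      have hmA : m ∈ A.image ψ := by
        refine Finset.mem_image.mpr ⟨F ψ, hFA, ?_⟩
        simp [hFdef, ← hm]
      have hmB : m ∈ B.image ψ := by
        refine Finset.mem_image.mpr ⟨F ψ, hFB, ?_⟩
        simp [hFdef, ← hm]
      have h1 : (A.image ψ).min' (hA.image ψ) = m :=
        le_antisymm (Finset.min'_le _ _ hmA) (Finset.min'_le _ _ (hsubA (Finset.min'_mem _ _)))
      have h2 : (B.image ψ).min' (hB.image ψ) = m :=
        le_antisymm (Finset.min'_le _ _ hmB) (Finset.min'_le _ _ (hsubB (Finset.min'_mem _ _)))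
      rw [h1, h2]
    -- fibers of F over U all have the same cardinality
  have fib : ∀ x ∈ U, ∀ y ∈ U,
      (Finset.univ.filter fun ψ : Equiv.Perm (Fin n) => F ψ = x).card =
      (Finset.univ.filter fun ψ : Equiv.Perm (Fin n) => F ψ = y).card := by
    intro x hx y hy
    set s : Equiv.Perm (Fin n) := Equiv.swap x y with hs
    have hsU : U.image s = U := by
      ext z
      have hmem : ∀ w : Fin n, s w ∈ U ↔ w ∈ U := by
        intro w
        rcases eq_or_ne w x with rfl | hwx
        · simp [hs, Equiv.swap_apply_left, hx, hy]
        rcases eq_or_ne w y with rfl | hwy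
        · simp [hs, Equiv.swap_apply_right, hx, hy]
        · rw [hs, Equiv.swap_apply_of_ne_of_ne hwx hwy]
      constructor
      · intro hz
        obtain ⟨w, hw, hwe⟩ := Finset.mem_image.mp hz
        exact hwe ▸ (hmem w).mpr hw
      · intro hz
        refine Finset.mem_image.mpr ⟨s z, ?_, ?_⟩
        · rw [hmem]
          · exact hz
        · simp [hs]
    have hFs : ∀ ψ : Equiv.Perm (Fin n), F (ψ * s) = s (F ψ) := by
      intro ψ
      have himg : Finset.image (⇑(ψ * s)) U = Finset.image (⇑ψ) U := by
        rw [show ((ψ * s : Equiv.Perm (Fin n)) : Fin n → Fin n) = ψ ∘ s from rfl,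
          ← Finset.image_image, hsU]
      simp only [hFdef, himg]
      have hrfl : (ψ * s).symm ((Finset.image (⇑ψ) U).min' (hU.image ψ)) =
          s.symm (ψ.symm ((Finset.image (⇑ψ) U).min' (hU.image ψ))) := rfl
      rw [hrfl, hs, Equiv.symm_swap]
    -- bijection ψ ↦ ψ * s between the fibers
    apply Finset.card_bij' (fun ψ _ => ψ * s) (fun ψ _ => ψ * s)
    · intro ψ hψ
      simp only [Finset.mem_filter, Finset.mem_univ, true_and] at hψ ⊢
      rw [hFs, hψ, hs, Equiv.swap_apply_left]
    · intro ψ hψ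
      simp only [Finset.mem_filter, Finset.mem_univ, true_and] at hψ ⊢
      rw [hFs, hψ, hs, Equiv.swap_apply_right]
    · intro ψ _; simp [hs]
    · intro ψ _; simp [hs]
  -- pick a base fiber cardinality
  obtain ⟨x₀, hx₀⟩ := hU
  set c : ℕ := (Finset.univ.filter fun ψ : Equiv.Perm (Fin n) => F ψ = x₀).card with hc
  have hfibc : ∀ x ∈ U,
      (Finset.univ.filter fun ψ : Equiv.Perm (Fin n) => F ψ = x).card = c :=
    fun x hx => fib x hx x₀ hx₀
  -- total count
  have htotal : Fintype.card (Equiv.Perm (Fin n)) = U.card * c := by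
    have := Finset.card_eq_sum_card_fiberwise
      (f := F) (s := (Finset.univ : Finset (Equiv.Perm (Fin n)))) (t := U)
      (fun ψ _ => hmemF ψ)
    rw [Fintype.card, this, Finset.sum_congr rfl (fun x hx => hfibc x hx),
      Finset.sum_const, smul_eq_mul]
  -- numerator count
  have hnum : (Finset.univ.filter (fun ψ : Equiv.Perm (Fin n) =>
        (A.image ψ).min' (hA.image ψ) = (B.image ψ).min' (hB.image ψ))).card
      = (A ∩ B).card * c := by
    have heq : (Finset.univ.filter (fun ψ : Equiv.Perm (Fin n) =>
        (A.image ψ).min' (hA.image ψ) = (B.image ψ).min' (hB.image ψ)))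
        = Finset.univ.filter (fun ψ => F ψ ∈ A ∩ B) := by
      apply Finset.filter_congr
      intro ψ _
      exact (key ψ)
    rw [heq]
    have hsub : ∀ ψ ∈ Finset.univ.filter (fun ψ : Equiv.Perm (Fin n) => F ψ ∈ A ∩ B),
        F ψ ∈ A ∩ B := fun ψ hψ => (Finset.mem_filter.mp hψ).2
    rw [Finset.card_eq_sum_card_fiberwise hsub]
    have : ∀ x ∈ A ∩ B,
        ((Finset.univ.filter (fun ψ : Equiv.Perm (Fin n) => F ψ ∈ A ∩ B)).filter
          (fun ψ => F ψ = x)).card = c := by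
      intro x hx
      have hxU : x ∈ U := Finset.mem_union_left _ (Finset.mem_inter.mp hx).1
      rw [← hfibc x hxU]
      congr 1
      ext ψ
      simp only [Finset.mem_filter, Finset.mem_univ, true_and]
      constructor
      · rintro ⟨_, h⟩; exact h
      · rintro h; exact ⟨h ▸ hx, h⟩
    rw [Finset.sum_congr rfl this, Finset.sum_const, smul_eq_mul]
  -- positivity
  have hcardpos : 0 < Fintype.card (Equiv.Perm (Fin n)) := Fintype.card_pos
  have hcpos : 0 < c := by
    by_contra h
    push_neg at h
    interval_cases c
    · simp [htotal] at hcardpos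
  have hUpos : 0 < U.card := Finset.card_pos.mpr ⟨x₀, hx₀⟩
  rw [hnum, htotal]
  push_cast
  rw [div_eq_div_iff (by positivity) (by positivity)]
  ring
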